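/- (Two quadratic constraints) Let q₁, q₂ : ℝⁿ → ℝ be nonconvex quadratics qᵢ(x) = xᵀAᵢx + 2bᵢᵀx + cᵢ. Assume primal strict feasibility (∃ x̂ with q₁(x̂) < 0 and q₂(x̂) < 0) and dual strict feasibility (∃ γ̂ ∈ ℝ²₊ with γ̂₁A₁ + γ̂₂A₂ ≻ 0). Let γ⁽¹⁾, γ⁽²⁾ ∈ ℝ²₊ be generators of the two-dimensional cone Γ₁ = {γ ∈ ℝ²₊ : γ₁A₁+γ₂A₂ ⪰ 0} (so Γ₁ = cone{γ⁽¹⁾,γ⁽²⁾}). Then conv(Ŝ) = Ŝ_SDP if and only if for each i ∈ {1,2}, the set ker(A[γ⁽ⁱ⁾]) ∩ (b[γ⁽ⁱ⁾])^⊥ contains a nonzero vector, where A[γ] := γ₁A₁+γ₂A₂ and b[γ] := γ₁b₁+γ₂b₂. -/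

import Mathlib

noncomputable section
open Matrix Set

/-- `A[γ] = γ₁ A₁ + γ₂ A₂` for `γ ∈ ℝ²`. -/
def Amix2 {n : ℕ} (A1 A2 : Matrix (Fin n) (Fin n) ℝ) (g : Fin 2 → ℝ) :
    Matrix (Fin n) (Fin n) ℝ :=
  g 0 • A1 + g 1 • A2

/-- `b[γ] = γ₁ b₁ + γ₂ b₂` for `γ ∈ ℝ²`. -/
def bmix2 {n : ℕ} (b1 b2 : Fin n → ℝ) (g : Fin 2 → ℝ) : Fin n → ℝ :=
  g 0 • b1 + g 1 • b2

/-- The quadratic function `x ↦ xᵀ M x + 2 bᵀ x + c`. -/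
def quadF {n : ℕ} (M : Matrix (Fin n) (Fin n) ℝ) (b : Fin n → ℝ) (c : ℝ)
    (x : Fin n → ℝ) : ℝ :=
  x ⬝ᵥ M.mulVec x + 2 * (b ⬝ᵥ x) + c

/-- `Γ₁ = {γ ∈ ℝ²₊ : γ₁A₁ + γ₂A₂ ⪰ 0}` (with objective `q₀ = 0`). -/
def Gamma1' {n : ℕ} (A1 A2 : Matrix (Fin n) (Fin n) ℝ) : Set (Fin 2 → ℝ) :=
  {g | (∀ i, 0 ≤ g i) ∧ (Amix2 A1 A2 g).PosSemidef}

/-- `Ŝ = {x : q₁(x) ≤ 0, q₂(x) ≤ 0}`. -/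
def Shat {n : ℕ} (A1 A2 : Matrix (Fin n) (Fin n) ℝ) (b1 b2 : Fin n → ℝ)
    (c1 c2 : ℝ) : Set (Fin n → ℝ) :=
  {x | quadF A1 b1 c1 x ≤ 0 ∧ quadF A2 b2 c2 x ≤ 0}

/-- `Ŝ_SDP = {x : ∃ X ⪰ xxᵀ, ⟨Aᵢ,X⟩ + 2bᵢᵀx + cᵢ ≤ 0, i = 1,2}`. -/
def ShatSDP {n : ℕ} (A1 A2 : Matrix (Fin n) (Fin n) ℝ) (b1 b2 : Fin n → ℝ)
    (c1 c2 : ℝ) : Set (Fin n → ℝ) :=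
  {x | ∃ X : Matrix (Fin n) (Fin n) ℝ, (X - vecMulVec x x).PosSemidef ∧
    (A1 * X).trace + 2 * (b1 ⬝ᵥ x) + c1 ≤ 0 ∧
    (A2 * X).trace + 2 * (b2 ⬝ᵥ x) + c2 ≤ 0}
namespace Stmt19

variable {n : ℕ}

/-- symmetry of the bilinear form -/
lemma dot_symm (M : Matrix (Fin n) (Fin n) ℝ) (hM : M.IsSymm) (x y : Fin n → ℝ) :
    x ⬝ᵥ M.mulVec y = y ⬝ᵥ M.mulVec x := by
  rw [dotProduct_mulVec x M y, ← Matrix.vecMul_transpose, hM.eq, dotProduct_comm]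

lemma psd_form_nonneg {M : Matrix (Fin n) (Fin n) ℝ} (hM : M.PosSemidef) (x : Fin n → ℝ) :
    0 ≤ x ⬝ᵥ M.mulVec x := by
  simpa using hM.dotProduct_mulVec_nonneg x

lemma pd_form_pos {M : Matrix (Fin n) (Fin n) ℝ} (hM : M.PosDef) {x : Fin n → ℝ} (hx : x ≠ 0) :
    0 < x ⬝ᵥ M.mulVec x := by
  simpa using hM.dotProduct_mulVec_pos hx

lemma psd_form_zero {M : Matrix (Fin n) (Fin n) ℝ} (hM : M.PosSemidef) {x : Fin n → ℝ}
    (h : x ⬝ᵥ M.mulVec x = 0) : M.mulVec x = 0 := by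
  rw [← hM.dotProduct_mulVec_zero_iff x]; simpa using h

/-- expansion of a quadratic along a line -/
lemma quad_expand (M : Matrix (Fin n) (Fin n) ℝ) (hM : M.IsSymm) (b : Fin n → ℝ) (c : ℝ)
    (x y : Fin n → ℝ) (t : ℝ) :
    quadF M b c (x + t • y)
      = quadF M b c x + 2 * t * ((M.mulVec x + b) ⬝ᵥ y) + t ^ 2 * (y ⬝ᵥ M.mulVec y) := by
  have hsym : x ⬝ᵥ M.mulVec y = y ⬝ᵥ M.mulVec x := dot_symm M hM x y
  have h2 : (M.mulVec x) ⬝ᵥ y = y ⬝ᵥ M.mulVec x := dotProduct_comm _ _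
  simp only [quadF, mulVec_add, mulVec_smul, dotProduct_add, add_dotProduct,
    dotProduct_smul, smul_dotProduct, smul_eq_mul, h2]
  rw [hsym]
  ring

/-- value of mixed quadratic -/
lemma quad_mix (A1 A2 : Matrix (Fin n) (Fin n) ℝ) (b1 b2 : Fin n → ℝ) (c1 c2 : ℝ)
    (g : Fin 2 → ℝ) (x : Fin n → ℝ) :
    quadF (Amix2 A1 A2 g) (bmix2 b1 b2 g) (g 0 * c1 + g 1 * c2) x
      = g 0 * quadF A1 b1 c1 x + g 1 * quadF A2 b2 c2 x := by
  simp only [quadF, Amix2, bmix2, add_mulVec, smul_mulVec, dotProduct_add,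
    add_dotProduct, dotProduct_smul, smul_dotProduct, smul_eq_mul]
  ring

lemma amix_form (A1 A2 : Matrix (Fin n) (Fin n) ℝ) (g : Fin 2 → ℝ) (x y : Fin n → ℝ) :
    x ⬝ᵥ (Amix2 A1 A2 g).mulVec y = g 0 * (x ⬝ᵥ A1.mulVec y) + g 1 * (x ⬝ᵥ A2.mulVec y) := by
  simp only [Amix2, add_mulVec, smul_mulVec, dotProduct_add, dotProduct_smul, smul_eq_mul]

lemma amix_symm {A1 A2 : Matrix (Fin n) (Fin n) ℝ} (hA1 : A1.IsSymm) (hA2 : A2.IsSymm)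
    (g : Fin 2 → ℝ) : (Amix2 A1 A2 g).IsSymm := by
  unfold Amix2
  exact (hA1.smul _).add (hA2.smul _)

lemma amix_smul (A1 A2 : Matrix (Fin n) (Fin n) ℝ) (s : ℝ) (g : Fin 2 → ℝ) :
    Amix2 A1 A2 (s • g) = s • Amix2 A1 A2 g := by
  unfold Amix2
  simp [smul_add, smul_smul]

lemma amix_add (A1 A2 : Matrix (Fin n) (Fin n) ℝ) (g h : Fin 2 → ℝ) :
    Amix2 A1 A2 (g + h) = Amix2 A1 A2 g + Amix2 A1 A2 h := by
  unfold Amix2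
  simp [add_smul]
  abel

lemma psd_smul {M : Matrix (Fin n) (Fin n) ℝ} (hM : M.PosSemidef) {c : ℝ} (hc : 0 ≤ c) :
    (c • M).PosSemidef := by
  have hh : (c • M).IsHermitian := by
    rw [Matrix.IsHermitian, conjTranspose_smul, hM.1, star_trivial]
  refine PosSemidef.of_dotProduct_mulVec_nonneg hh fun x => ?_
  have := psd_form_nonneg hM x
  simp only [smul_mulVec, dotProduct_smul, smul_eq_mul, star_trivial]
  exact mul_nonneg hc (by simpa using this)

lemma pd_smul {M : Matrix (Fin n) (Fin n) ℝ} (hM : M.PosDef) {c : ℝ} (hc : 0 < c) :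
    (c • M).PosDef := by
  have hh : (c • M).IsHermitian := by
    rw [Matrix.IsHermitian, conjTranspose_smul, hM.1, star_trivial]
  refine PosDef.of_dotProduct_mulVec_pos hh fun x hx => ?_
  have := pd_form_pos hM hx
  simp only [smul_mulVec, dotProduct_smul, smul_eq_mul, star_trivial]
  exact mul_pos hc (by simpa using this)

lemma psd_vecMulVec (y : Fin n → ℝ) : (vecMulVec y y).PosSemidef := by
  refine PosSemidef.of_dotProduct_mulVec_nonneg ?_ ?_
  · ext i j
    simp [vecMulVec_apply, conjTranspose_apply, mul_comm]
  · intro x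
    have h : (vecMulVec y y).mulVec x = (y ⬝ᵥ x) • y := by
      ext i
      simp only [mulVec, vecMulVec_apply, dotProduct, Pi.smul_apply, smul_eq_mul]
      rw [Finset.sum_mul]
      apply Finset.sum_congr rfl
      intro j _
      ring
    rw [h]
    simp only [star_trivial, dotProduct_smul, smul_eq_mul]
    have : x ⬝ᵥ y = y ⬝ᵥ x := dotProduct_comm _ _
    rw [this]
    exact mul_self_nonneg _

lemma trace_mul_vecMulVec (A : Matrix (Fin n) (Fin n) ℝ) (u : Fin n → ℝ) :
    (A * vecMulVec u u).trace = u ⬝ᵥ A.mulVec u := by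
  simp only [trace, diag, mul_apply, vecMulVec_apply, dotProduct, mulVec, Finset.mul_sum]
  apply Finset.sum_congr rfl
  intro i _
  apply Finset.sum_congr rfl
  intro j _
  ring

end Stmt19
namespace Stmt19

variable {n : ℕ}

lemma dim0_psd (h0 : n = 0) (M : Matrix (Fin n) (Fin n) ℝ) : M.PosSemidef := by
  subst h0
  refine PosSemidef.of_dotProduct_mulVec_nonneg ?_ (fun x => ?_)
  · ext i j; exact i.elim0
  · simp [dotProduct]

lemma solve22 {p q r s u v : ℝ} (hdet : p * s - q * r ≠ 0)
    (h1 : u * p + v * r = 0) (h2 : u * q + v * s = 0) : u = 0 ∧ v = 0 := by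
  have hu : u * (p * s - q * r) = 0 := by linear_combination s * h1 - r * h2
  have hv : v * (p * s - q * r) = 0 := by linear_combination - q * h1 + p * h2
  exact ⟨(mul_eq_zero.mp hu).resolve_right hdet, (mul_eq_zero.mp hv).resolve_right hdet⟩

lemma quadform_continuous (M : Matrix (Fin n) (Fin n) ℝ) :
    Continuous fun x : Fin n → ℝ => x ⬝ᵥ M.mulVec x := by
  have h : (fun x : Fin n → ℝ => x ⬝ᵥ M.mulVec x)
      = fun x => ∑ i, x i * ∑ j, M i j * x j := rfl
  rw [h]
  exact continuous_finset_sum _ fun i _ =>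
    (continuous_apply i).mul (continuous_finset_sum _ fun j _ =>
      continuous_const.mul (continuous_apply j))

lemma form_smul (M : Matrix (Fin n) (Fin n) ℝ) (r : ℝ) (u : Fin n → ℝ) :
    (r • u) ⬝ᵥ M.mulVec (r • u) = r ^ 2 * (u ⬝ᵥ M.mulVec u) := by
  simp only [mulVec_smul, dotProduct_smul, smul_dotProduct, smul_eq_mul]
  ring

/-- perturbation of a positive definite matrix stays PSD -/
lemma pd_perturb {A B : Matrix (Fin n) (Fin n) ℝ} (hA : A.PosDef) (hB : B.IsHermitian) :
    ∃ ε : ℝ, 0 < ε ∧ ∀ δ : ℝ, 0 ≤ δ → δ ≤ ε → (A - δ • B).PosSemidef := by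
  rcases Nat.eq_zero_or_pos n with h0 | hn
  · exact ⟨1, one_pos, fun δ _ _ => dim0_psd h0 _⟩
  haveI : Nonempty (Fin n) := ⟨⟨0, hn⟩⟩
  set f : (Fin n → ℝ) → ℝ := fun x => x ⬝ᵥ A.mulVec x with hf
  set gq : (Fin n → ℝ) → ℝ := fun x => |x ⬝ᵥ B.mulVec x| with hg
  have hfc : Continuous f := quadform_continuous A
  have hgc : Continuous gq := (quadform_continuous B).abs
  have hsph : IsCompact (Metric.sphere (0 : Fin n → ℝ) 1) := isCompact_sphere 0 1
  have hne : (Metric.sphere (0 : Fin n → ℝ) 1).Nonempty :=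
    NormedSpace.sphere_nonempty.mpr zero_le_one
  obtain ⟨x0, hx0mem, hx0min⟩ := hsph.exists_isMinOn hne hfc.continuousOn
  obtain ⟨x1, hx1mem, hx1max⟩ := hsph.exists_isMaxOn hne hgc.continuousOn
  have hx0ne : x0 ≠ 0 := by
    intro h
    rw [h] at hx0mem
    simp at hx0mem
  have hc : 0 < f x0 := pd_form_pos hA hx0ne
  have hC : 0 ≤ gq x1 := abs_nonneg _
  set c := f x0
  set C := gq x1
  refine ⟨c / (C + 1), div_pos hc (by linarith), fun δ hδ0 hδε => ?_⟩
  have hδc : δ * (C + 1) ≤ c := (le_div_iff₀ (by linarith)).mp hδε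
  have hherm : (A - δ • B).IsHermitian := by
    rw [Matrix.IsHermitian, conjTranspose_sub, conjTranspose_smul, hA.1, hB, star_trivial]
  refine PosSemidef.of_dotProduct_mulVec_nonneg hherm fun x => ?_
  rw [star_trivial]
  by_cases hx : x = 0
  · simp [hx]
  have hr : 0 < ‖x‖ := norm_pos_iff.mpr hx
  set u : Fin n → ℝ := ‖x‖⁻¹ • x with hu
  have humem : u ∈ Metric.sphere (0 : Fin n → ℝ) 1 := by
    simp only [hu, mem_sphere_iff_norm, sub_zero, norm_smul, norm_inv, norm_norm]
    field_simp
  have hxu : x = ‖x‖ • u := by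
    rw [hu, smul_smul, mul_inv_cancel₀ (ne_of_gt hr), one_smul]
  have hfa : u ⬝ᵥ A.mulVec u = ‖x‖⁻¹ ^ 2 * (x ⬝ᵥ A.mulVec x) := by
    rw [hu]; exact form_smul A _ x
  have hfb : u ⬝ᵥ B.mulVec u = ‖x‖⁻¹ ^ 2 * (x ⬝ᵥ B.mulVec x) := by
    rw [hu]; exact form_smul B _ x
  have hK : 0 < ‖x‖⁻¹ ^ 2 := by positivity
  have expand : x ⬝ᵥ (A - δ • B).mulVec x
      = (x ⬝ᵥ A.mulVec x) - δ * (x ⬝ᵥ B.mulVec x) := by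
    simp only [sub_mulVec, smul_mulVec, dotProduct_sub, dotProduct_smul, smul_eq_mul]
  rw [expand]
  have h1 : c ≤ ‖x‖⁻¹ ^ 2 * (x ⬝ᵥ A.mulVec x) := hfa ▸ hx0min humem
  have h2 : |‖x‖⁻¹ ^ 2 * (x ⬝ᵥ B.mulVec x)| ≤ C := hfb ▸ hx1max humem
  have h2' : ‖x‖⁻¹ ^ 2 * (x ⬝ᵥ B.mulVec x) ≤ C := le_trans (le_abs_self _) h2
  have h6 : 0 ≤ ‖x‖⁻¹ ^ 2 * ((x ⬝ᵥ A.mulVec x) - δ * (x ⬝ᵥ B.mulVec x)) := by nlinarith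
  nlinarith [mul_pos hK (show (0:ℝ) < 1 by norm_num)]

end Stmt19
namespace Stmt19

variable {n : ℕ}

lemma trace_ctm_self_nonneg (E : Matrix (Fin n) (Fin n) ℝ) : 0 ≤ (Eᴴ * E).trace := by
  simp only [trace, diag, mul_apply, conjTranspose_apply, star_trivial]
  refine Finset.sum_nonneg fun j _ => Finset.sum_nonneg fun i _ => mul_self_nonneg _

lemma trace_psd_mul_nonneg {M N : Matrix (Fin n) (Fin n) ℝ}
    (hM : M.PosSemidef) (hN : N.PosSemidef) : 0 ≤ (M * N).trace := by
  obtain ⟨C, rfl⟩ : ∃ C : Matrix (Fin n) (Fin n) ℝ, M = Cᴴ * C := by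
    open scoped MatrixOrder in exact CStarAlgebra.nonneg_iff_eq_star_mul_self.mp hM.nonneg
  obtain ⟨D, rfl⟩ : ∃ D : Matrix (Fin n) (Fin n) ℝ, N = Dᴴ * D := by
    open scoped MatrixOrder in exact CStarAlgebra.nonneg_iff_eq_star_mul_self.mp hN.nonneg
  have h : Cᴴ * C * (Dᴴ * D) = Cᴴ * (C * Dᴴ) * D := by
    simp only [Matrix.mul_assoc]
  rw [h, Matrix.trace_mul_cycle]
  have h2 : D * Cᴴ * (C * Dᴴ) = (C * Dᴴ)ᴴ * (C * Dᴴ) := by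
    rw [conjTranspose_mul, conjTranspose_conjTranspose]
  rw [h2]
  exact trace_ctm_self_nonneg _

lemma Shat_swap (A1 A2 : Matrix (Fin n) (Fin n) ℝ) (b1 b2 : Fin n → ℝ) (c1 c2 : ℝ) :
    Shat A1 A2 b1 b2 c1 c2 = Shat A2 A1 b2 b1 c2 c1 := by
  ext x; exact and_comm

lemma ShatSDP_swap (A1 A2 : Matrix (Fin n) (Fin n) ℝ) (b1 b2 : Fin n → ℝ) (c1 c2 : ℝ) :
    ShatSDP A1 A2 b1 b2 c1 c2 = ShatSDP A2 A1 b2 b1 c2 c1 := by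
  ext x
  exact ⟨fun ⟨X, h, h1, h2⟩ => ⟨X, h, h2, h1⟩, fun ⟨X, h, h1, h2⟩ => ⟨X, h, h2, h1⟩⟩

lemma Shat_subset_SDP (A1 A2 : Matrix (Fin n) (Fin n) ℝ) (b1 b2 : Fin n → ℝ) (c1 c2 : ℝ) :
    Shat A1 A2 b1 b2 c1 c2 ⊆ ShatSDP A1 A2 b1 b2 c1 c2 := by
  intro x hx
  refine ⟨vecMulVec x x, by simpa [sub_self] using Matrix.PosSemidef.zero, ?_, ?_⟩
  · rw [trace_mul_vecMulVec]; exact hx.1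
  · rw [trace_mul_vecMulVec]; exact hx.2

lemma SDP_convex (A1 A2 : Matrix (Fin n) (Fin n) ℝ) (b1 b2 : Fin n → ℝ) (c1 c2 : ℝ) :
    Convex ℝ (ShatSDP A1 A2 b1 b2 c1 c2) := by
  rintro x ⟨X1, hX1, h11, h12⟩ y ⟨X2, hX2, h21, h22⟩ a b ha hb hab
  refine ⟨a • X1 + b • X2, ?_, ?_, ?_⟩
  · have key : a • X1 + b • X2 - vecMulVec (a • x + b • y) (a • x + b • y)
        = a • (X1 - vecMulVec x x) + b • (X2 - vecMulVec y y)
          + (a * b) • vecMulVec (x - y) (x - y) := by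
      ext i j
      simp only [Matrix.sub_apply, Matrix.add_apply, Matrix.smul_apply, vecMulVec_apply,
        Pi.add_apply, Pi.smul_apply, Pi.sub_apply, smul_eq_mul]
      have hb' : b = 1 - a := by linarith
      subst hb'; ring
    rw [key]
    exact ((psd_smul hX1 ha).add (psd_smul hX2 hb)).add
      (psd_smul (psd_vecMulVec _) (mul_nonneg ha hb))
  · have ht : (A1 * (a • X1 + b • X2)).trace
        = a * (A1 * X1).trace + b * (A1 * X2).trace := by
      simp only [Matrix.mul_add, Matrix.mul_smul, trace_add, trace_smul, smul_eq_mul]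
    have hd : b1 ⬝ᵥ (a • x + b • y) = a * (b1 ⬝ᵥ x) + b * (b1 ⬝ᵥ y) := by
      simp only [dotProduct_add, dotProduct_smul, smul_eq_mul]
    rw [ht, hd]
    have t1 : a * ((A1 * X1).trace + 2 * (b1 ⬝ᵥ x) + c1) ≤ 0 := by
      have := mul_le_mul_of_nonneg_left h11 ha; simpa using this
    have t2 : b * ((A1 * X2).trace + 2 * (b1 ⬝ᵥ y) + c1) ≤ 0 := by
      have := mul_le_mul_of_nonneg_left h21 hb; simpa using this
    have hc : a * c1 + b * c1 = c1 := by rw [← add_mul, hab, one_mul]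
    linarith [t1, t2, hc]
  · have ht : (A2 * (a • X1 + b • X2)).trace
        = a * (A2 * X1).trace + b * (A2 * X2).trace := by
      simp only [Matrix.mul_add, Matrix.mul_smul, trace_add, trace_smul, smul_eq_mul]
    have hd : b2 ⬝ᵥ (a • x + b • y) = a * (b2 ⬝ᵥ x) + b * (b2 ⬝ᵥ y) := by
      simp only [dotProduct_add, dotProduct_smul, smul_eq_mul]
    rw [ht, hd]
    have t1 : a * ((A2 * X1).trace + 2 * (b2 ⬝ᵥ x) + c2) ≤ 0 := by
      have := mul_le_mul_of_nonneg_left h12 ha; simpa using this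
    have t2 : b * ((A2 * X2).trace + 2 * (b2 ⬝ᵥ y) + c2) ≤ 0 := by
      have := mul_le_mul_of_nonneg_left h22 hb; simpa using this
    have hc : a * c2 + b * c2 = c2 := by rw [← add_mul, hab, one_mul]
    linarith [t1, t2, hc]

lemma convexHull_subset_SDP (A1 A2 : Matrix (Fin n) (Fin n) ℝ) (b1 b2 : Fin n → ℝ)
    (c1 c2 : ℝ) :
    convexHull ℝ (Shat A1 A2 b1 b2 c1 c2) ⊆ ShatSDP A1 A2 b1 b2 c1 c2 :=
  convexHull_min (Shat_subset_SDP _ _ _ _ _ _) (SDP_convex _ _ _ _ _ _)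

/-- aggregated constraint holds on the SDP relaxation -/
lemma SDP_agg {A1 A2 : Matrix (Fin n) (Fin n) ℝ} {b1 b2 : Fin n → ℝ} {c1 c2 : ℝ}
    (g : Fin 2 → ℝ) (hg : ∀ i, 0 ≤ g i) (hpsd : (Amix2 A1 A2 g).PosSemidef)
    {x : Fin n → ℝ} (hx : x ∈ ShatSDP A1 A2 b1 b2 c1 c2) :
    g 0 * quadF A1 b1 c1 x + g 1 * quadF A2 b2 c2 x ≤ 0 := by
  obtain ⟨X, hX, h1, h2⟩ := hx
  have htr : 0 ≤ (Amix2 A1 A2 g * (X - vecMulVec x x)).trace := trace_psd_mul_nonneg hpsd hX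
  have hexp : (Amix2 A1 A2 g * (X - vecMulVec x x)).trace
      = g 0 * ((A1 * X).trace - x ⬝ᵥ A1.mulVec x)
        + g 1 * ((A2 * X).trace - x ⬝ᵥ A2.mulVec x) := by
    simp only [Amix2, Matrix.add_mul, Matrix.smul_mul, Matrix.mul_sub, trace_add, trace_smul,
      trace_sub, trace_mul_vecMulVec, smul_eq_mul]
    ring
  rw [hexp] at htr
  simp only [quadF]
  have t1 : g 0 * ((A1 * X).trace + 2 * (b1 ⬝ᵥ x) + c1) ≤ 0 := by
    have := mul_le_mul_of_nonneg_left h1 (hg 0); simpa using this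
  have t2 : g 1 * ((A2 * X).trace + 2 * (b2 ⬝ᵥ x) + c2) ≤ 0 := by
    have := mul_le_mul_of_nonneg_left h2 (hg 1); simpa using this
  linarith [t1, t2, htr]

end Stmt19
namespace Stmt19

variable {n : ℕ}

lemma trace_X_comb (A : Matrix (Fin n) (Fin n) ℝ) (x y1 y2 : Fin n → ℝ) (s1 s2 : ℝ) :
    (A * (vecMulVec x x + (s1 • vecMulVec y1 y1 + s2 • vecMulVec y2 y2))).trace
      = x ⬝ᵥ A.mulVec x + s1 * (y1 ⬝ᵥ A.mulVec y1) + s2 * (y2 ⬝ᵥ A.mulVec y2) := by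
  simp only [Matrix.mul_add, Matrix.mul_smul, trace_add, trace_smul, trace_mul_vecMulVec,
    smul_eq_mul]
  ring

/-- points satisfying both aggregated constraints are in the SDP relaxation -/
lemma mem_SDP_of_T {A1 A2 : Matrix (Fin n) (Fin n) ℝ} {b1 b2 : Fin n → ℝ}
    {c1 c2 : ℝ} {g1 g2 : Fin 2 → ℝ}
    (hdet : g1 0 * g2 1 - g1 1 * g2 0 ≠ 0)
    {y1 y2 : Fin n → ℝ}
    (hk1 : (Amix2 A1 A2 g1).mulVec y1 = 0)
    (hk2 : (Amix2 A1 A2 g2).mulVec y2 = 0)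
    (w12pos : 0 < y1 ⬝ᵥ (Amix2 A1 A2 g2).mulVec y1)
    (w21pos : 0 < y2 ⬝ᵥ (Amix2 A1 A2 g1).mulVec y2)
    {x : Fin n → ℝ}
    (hp1 : g1 0 * quadF A1 b1 c1 x + g1 1 * quadF A2 b2 c2 x ≤ 0)
    (hp2 : g2 0 * quadF A1 b1 c1 x + g2 1 * quadF A2 b2 c2 x ≤ 0) :
    x ∈ ShatSDP A1 A2 b1 b2 c1 c2 := by
  set v1 := quadF A1 b1 c1 x with hv1
  set v2 := quadF A2 b2 c2 x with hv2
  set a1 := y1 ⬝ᵥ A1.mulVec y1 with ha1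
  set a2 := y1 ⬝ᵥ A2.mulVec y1 with ha2
  set a1' := y2 ⬝ᵥ A1.mulVec y2 with ha1'
  set a2' := y2 ⬝ᵥ A2.mulVec y2 with ha2'
  have e1 : g1 0 * a1 + g1 1 * a2 = 0 := by
    rw [ha1, ha2, ← amix_form, hk1, dotProduct_zero]
  have e2 : 0 < g2 0 * a1 + g2 1 * a2 := by
    rw [ha1, ha2, ← amix_form]; exact w12pos
  have e3 : g2 0 * a1' + g2 1 * a2' = 0 := by
    rw [ha1', ha2', ← amix_form, hk2, dotProduct_zero]
  have e4 : 0 < g1 0 * a1' + g1 1 * a2' := by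
    rw [ha1', ha2', ← amix_form]; exact w21pos
  set w12 := g2 0 * a1 + g2 1 * a2 with hw12
  set w21 := g1 0 * a1' + g1 1 * a2' with hw21
  set s1 := -(g2 0 * v1 + g2 1 * v2) / w12 with hs1d
  set s2 := -(g1 0 * v1 + g1 1 * v2) / w21 with hs2d
  have hs1 : 0 ≤ s1 := div_nonneg (by linarith) (le_of_lt e2)
  have hs2 : 0 ≤ s2 := div_nonneg (by linarith) (le_of_lt e4)
  have hs1w : s1 * w12 = -(g2 0 * v1 + g2 1 * v2) := by
    rw [hs1d]; field_simp
  have hs2w : s2 * w21 = -(g1 0 * v1 + g1 1 * v2) := by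
    rw [hs2d]; field_simp
  -- the constraint values vanish
  have key : v1 + s1 * a1 + s2 * a1' = 0 ∧ v2 + s1 * a2 + s2 * a2' = 0 := by
    have c1' : (v1 + s1 * a1 + s2 * a1') * g1 0 + (v2 + s1 * a2 + s2 * a2') * g1 1 = 0 := by
      have : s2 * (g1 0 * a1' + g1 1 * a2') = -(g1 0 * v1 + g1 1 * v2) := by
        rw [← hw21]; exact hs2w
      nlinarith [e1, this]
    have c2' : (v1 + s1 * a1 + s2 * a1') * g2 0 + (v2 + s1 * a2 + s2 * a2') * g2 1 = 0 := by
      have : s1 * (g2 0 * a1 + g2 1 * a2) = -(g2 0 * v1 + g2 1 * v2) := by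
        rw [← hw12]; exact hs1w
      nlinarith [e3, this]
    refine solve22 ?_ c1' c2'
    rw [mul_comm (g2 0) (g1 1)]; exact hdet
  refine ⟨vecMulVec x x + (s1 • vecMulVec y1 y1 + s2 • vecMulVec y2 y2), ?_, ?_, ?_⟩
  · rw [add_sub_cancel_left]
    exact (psd_smul (psd_vecMulVec y1) hs1).add (psd_smul (psd_vecMulVec y2) hs2)
  · rw [trace_X_comb]
    have : x ⬝ᵥ A1.mulVec x + s1 * a1 + s2 * a1' + 2 * (b1 ⬝ᵥ x) + c1
        = v1 + s1 * a1 + s2 * a1' := by rw [hv1]; simp only [quadF]; ring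
    rw [this, key.1]
  · rw [trace_X_comb]
    have : x ⬝ᵥ A2.mulVec x + s1 * a2 + s2 * a2' + 2 * (b2 ⬝ᵥ x) + c2
        = v2 + s1 * a2 + s2 * a2' := by rw [hv2]; simp only [quadF]; ring
    rw [this, key.2]

end Stmt19
namespace Stmt19

variable {n : ℕ}

lemma line_mem_convexHull {A1 A2 : Matrix (Fin n) (Fin n) ℝ} {b1 b2 : Fin n → ℝ} {c1 c2 : ℝ}
    (hA1 : A1.IsSymm) (hA2 : A2.IsSymm)
    {ga gb : ℝ} (hga : 0 < ga) (hgb : 0 < gb)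
    {y : Fin n → ℝ}
    (hky : (ga • A1 + gb • A2).mulVec y = 0)
    (hkb : (ga • b1 + gb • b2) ⬝ᵥ y = 0)
    (hneg : y ⬝ᵥ A1.mulVec y < 0)
    {x : Fin n → ℝ}
    (hp : ga * quadF A1 b1 c1 x + gb * quadF A2 b2 c2 x ≤ 0)
    (hq1 : 0 < quadF A1 b1 c1 x) :
    x ∈ convexHull ℝ (Shat A1 A2 b1 b2 c1 c2) := by
  set B := ga • A1 + gb • A2 with hB
  have hBsymm : B.IsSymm := (hA1.smul ga).add (hA2.smul gb)
  have lin0 : (B.mulVec x) ⬝ᵥ y = 0 := by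
    rw [dotProduct_comm, dot_symm B hBsymm y x, hky, dotProduct_zero]
  have quad0 : y ⬝ᵥ B.mulVec y = 0 := by rw [hky, dotProduct_zero]
  set α := y ⬝ᵥ A1.mulVec y with hα
  set β := (A1.mulVec x + b1) ⬝ᵥ y with hβ
  set q := quadF A1 b1 c1 x with hq
  have h1 : ga * ((A1.mulVec x + b1) ⬝ᵥ y) + gb * ((A2.mulVec x + b2) ⬝ᵥ y) = 0 := by
    have hx1 : (B.mulVec x) ⬝ᵥ y + (ga • b1 + gb • b2) ⬝ᵥ y
        = ga * ((A1.mulVec x + b1) ⬝ᵥ y) + gb * ((A2.mulVec x + b2) ⬝ᵥ y) := by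
      simp only [hB, add_mulVec, smul_mulVec, add_dotProduct, smul_dotProduct,
        dotProduct_add, smul_eq_mul]
      ring
    rw [lin0, hkb] at hx1
    linarith
  have h2 : ga * (y ⬝ᵥ A1.mulVec y) + gb * (y ⬝ᵥ A2.mulVec y) = 0 := by
    have hx2 : y ⬝ᵥ B.mulVec y = ga * (y ⬝ᵥ A1.mulVec y) + gb * (y ⬝ᵥ A2.mulVec y) := by
      simp only [hB, add_mulVec, smul_mulVec, dotProduct_add, dotProduct_smul, smul_eq_mul]
    rw [quad0] at hx2
    linarith
  have hinv : ∀ t : ℝ, ga * quadF A1 b1 c1 (x + t • y) + gb * quadF A2 b2 c2 (x + t • y)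
      = ga * quadF A1 b1 c1 x + gb * quadF A2 b2 c2 x := by
    intro t
    rw [quad_expand A1 hA1 b1 c1 x y t, quad_expand A2 hA2 b2 c2 x y t]
    linear_combination (2 * t) * h1 + t ^ 2 * h2
  have hroot : ∀ t : ℝ, quadF A1 b1 c1 (x + t • y) = q + 2 * t * β + t ^ 2 * α :=
    fun t => quad_expand A1 hA1 b1 c1 x y t
  have hαne : α ≠ 0 := ne_of_lt hneg
  have hdiscpos : 0 < β ^ 2 - α * q := by nlinarith [sq_nonneg β]
  set r := Real.sqrt (β ^ 2 - α * q) with hrdef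
  have hr2 : r ^ 2 = β ^ 2 - α * q := Real.sq_sqrt (le_of_lt hdiscpos)
  have hrpos : 0 < r := Real.sqrt_pos.mpr hdiscpos
  set t1 := (-β + r) / α with ht1
  set t2 := (-β - r) / α with ht2
  have hroot1 : q + 2 * t1 * β + t1 ^ 2 * α = 0 := by
    rw [ht1]
    field_simp
    linear_combination hr2
  have hroot2 : q + 2 * t2 * β + t2 ^ 2 * α = 0 := by
    rw [ht2]
    field_simp
    linear_combination hr2
  have hprod : t1 * t2 < 0 := by
    have : t1 * t2 = q / α := by
      rw [ht1, ht2]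
      field_simp
      linear_combination (-1) * hr2
    rw [this]
    exact div_neg_of_pos_of_neg hq1 hneg
  have hlt : t1 < t2 := by
    have hdd : t2 - t1 = (-2 * r) / α := by
      rw [ht1, ht2]; field_simp; ring
    have : 0 < (-2 * r) / α := div_pos_of_neg_of_neg (by linarith) hneg
    linarith [hdd ▸ this]
  clear_value t1 t2 r
  have ht1neg : t1 < 0 := by nlinarith
  have ht2pos : 0 < t2 := by nlinarith
  have hz1q1 : quadF A1 b1 c1 (x + t1 • y) = 0 := by rw [hroot t1]; exact hroot1
  have hz2q1 : quadF A1 b1 c1 (x + t2 • y) = 0 := by rw [hroot t2]; exact hroot2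
  have hq2z1 : quadF A2 b2 c2 (x + t1 • y) ≤ 0 := by
    have h01 := hinv t1
    rw [hz1q1, mul_zero, zero_add] at h01
    have hle : gb * quadF A2 b2 c2 (x + t1 • y) ≤ gb * 0 := by
      rw [mul_zero, h01]; exact hp
    exact le_of_mul_le_mul_left hle hgb
  have hq2z2 : quadF A2 b2 c2 (x + t2 • y) ≤ 0 := by
    have h02 := hinv t2
    rw [hz2q1, mul_zero, zero_add] at h02
    have hle : gb * quadF A2 b2 c2 (x + t2 • y) ≤ gb * 0 := by
      rw [mul_zero, h02]; exact hp
    exact le_of_mul_le_mul_left hle hgb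
  have hz1S : x + t1 • y ∈ Shat A1 A2 b1 b2 c1 c2 := ⟨le_of_eq hz1q1, hq2z1⟩
  have hz2S : x + t2 • y ∈ Shat A1 A2 b1 b2 c1 c2 := ⟨le_of_eq hz2q1, hq2z2⟩
  have hd : 0 < t2 - t1 := by linarith
  refine (convex_convexHull ℝ _).segment_subset (subset_convexHull ℝ _ hz1S)
    (subset_convexHull ℝ _ hz2S) ⟨t2 / (t2 - t1), -t1 / (t2 - t1), ?_, ?_, ?_, ?_⟩
  · exact div_nonneg (le_of_lt ht2pos) (le_of_lt hd)
  · exact div_nonneg (by linarith) (le_of_lt hd)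
  · rw [← add_div, div_eq_one_iff_eq (ne_of_gt hd)]
    ring
  · funext i
    simp only [Pi.add_apply, Pi.smul_apply, smul_eq_mul]
    field_simp
    ring

end Stmt19
namespace Stmt19

variable {n : ℕ}

lemma quad_convex {B : Matrix (Fin n) (Fin n) ℝ} (hBs : B.IsSymm) (hpsd : B.PosSemidef)
    (d : Fin n → ℝ) (e : ℝ) (a b : Fin n → ℝ) {s : ℝ} (hs : 0 ≤ s) (hs1 : s ≤ 1) :
    quadF B d e (a + s • (b - a)) ≤ (1 - s) * quadF B d e a + s * quadF B d e b := by
  have hb : quadF B d e b = quadF B d e a + 2 * 1 * ((B.mulVec a + d) ⬝ᵥ (b - a))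
      + 1 ^ 2 * ((b - a) ⬝ᵥ B.mulVec (b - a)) := by
    have := quad_expand B hBs d e a (b - a) 1
    rw [one_smul, add_sub_cancel] at this
    exact this
  rw [quad_expand B hBs d e a (b - a) s, hb]
  nlinarith [psd_form_nonneg hpsd (b - a), mul_nonneg hs (sub_nonneg.mpr hs1),
    psd_form_nonneg hpsd (b - a)]

set_option maxHeartbeats 1000000 in
/-- if the kernel condition fails for `g1`, the SDP set is strictly bigger -/
lemma bwd_witness {A1 A2 : Matrix (Fin n) (Fin n) ℝ} {b1 b2 : Fin n → ℝ} {c1 c2 : ℝ}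
    (hA1 : A1.IsSymm) (hA2 : A2.IsSymm)
    {g1 g2 : Fin 2 → ℝ}
    (hg10 : 0 < g1 0) (hg11 : 0 < g1 1) (hg20 : 0 < g2 0) (hg21 : 0 < g2 1)
    (hdet : g1 0 * g2 1 - g1 1 * g2 0 ≠ 0)
    (hB1 : (Amix2 A1 A2 g1).PosSemidef) (hB2 : (Amix2 A1 A2 g2).PosSemidef)
    {y2 : Fin n → ℝ} (hk2 : (Amix2 A1 A2 g2).mulVec y2 = 0)
    (hpos21 : 0 < y2 ⬝ᵥ (Amix2 A1 A2 g1).mulVec y2)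
    {xh : Fin n → ℝ}
    (hp1h : g1 0 * quadF A1 b1 c1 xh + g1 1 * quadF A2 b2 c2 xh < 0)
    (hp2h : g2 0 * quadF A1 b1 c1 xh + g2 1 * quadF A2 b2 c2 xh < 0)
    (hfail : ∀ y : Fin n → ℝ, (Amix2 A1 A2 g1).mulVec y = 0 → bmix2 b1 b2 g1 ⬝ᵥ y = 0 → y = 0)
    (hTsub : ∀ x : Fin n → ℝ,
      g1 0 * quadF A1 b1 c1 x + g1 1 * quadF A2 b2 c2 x ≤ 0 →
      g2 0 * quadF A1 b1 c1 x + g2 1 * quadF A2 b2 c2 x ≤ 0 →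
      x ∈ ShatSDP A1 A2 b1 b2 c1 c2) :
    convexHull ℝ (Shat A1 A2 b1 b2 c1 c2) ≠ ShatSDP A1 A2 b1 b2 c1 c2 := by
  classical
  set B1 := Amix2 A1 A2 g1 with hB1d
  set B2 := Amix2 A1 A2 g2 with hB2d
  set d1 := bmix2 b1 b2 g1 with hd1d
  set d2 := bmix2 b1 b2 g2 with hd2d
  set e1 := g1 0 * c1 + g1 1 * c2 with he1d
  set e2 := g2 0 * c1 + g2 1 * c2 with he2d
  have hB1s : B1.IsSymm := amix_symm hA1 hA2 g1
  have hB2s : B2.IsSymm := amix_symm hA1 hA2 g2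
  have hmix1 : ∀ x, quadF B1 d1 e1 x = g1 0 * quadF A1 b1 c1 x + g1 1 * quadF A2 b2 c2 x :=
    fun x => quad_mix A1 A2 b1 b2 c1 c2 g1 x
  have hmix2 : ∀ x, quadF B2 d2 e2 x = g2 0 * quadF A1 b1 c1 x + g2 1 * quadF A2 b2 c2 x :=
    fun x => quad_mix A1 A2 b1 b2 c1 c2 g2 x
  have hp1hx : quadF B1 d1 e1 xh < 0 := by rw [hmix1]; exact hp1h
  have hp2hx : quadF B2 d2 e2 xh < 0 := by rw [hmix2]; exact hp2h
  -- step 1 : find z with p1 z > 0 and p2 z < 0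
  set γ := y2 ⬝ᵥ B1.mulVec y2 with hγd
  set β := (B1.mulVec xh + d1) ⬝ᵥ y2 with hβd
  set δ2 := d2 ⬝ᵥ y2 with hδ2d
  have hγ : 0 < γ := hpos21
  have hB2xh : (B2.mulVec xh + d2) ⬝ᵥ y2 = δ2 := by
    rw [add_dotProduct, dotProduct_comm, dot_symm B2 hB2s y2 xh, hk2, dotProduct_zero, zero_add]
  have hB2quad : y2 ⬝ᵥ B2.mulVec y2 = 0 := by rw [hk2, dotProduct_zero]
  set T := (2 * |β| + |quadF B1 d1 e1 xh| + γ + 1) / γ with hTd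
  have hT1 : 1 ≤ T := by
    rw [hTd, le_div_iff₀ hγ, one_mul]
    have := abs_nonneg β
    have := abs_nonneg (quadF B1 d1 e1 xh)
    linarith
  have hγT : γ * T = 2 * |β| + |quadF B1 d1 e1 xh| + γ + 1 := by
    rw [hTd]; field_simp
  clear_value T
  have habs1 : -|β| ≤ β := neg_abs_le β
  have habs2 : β ≤ |β| := le_abs_self β
  have habsp : -|quadF B1 d1 e1 xh| ≤ quadF B1 d1 e1 xh := neg_abs_le _
  have hp1general : ∀ t : ℝ, quadF B1 d1 e1 (xh + t • y2)
      = quadF B1 d1 e1 xh + 2 * t * β + t ^ 2 * γ := by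
    intro t
    rw [quad_expand B1 hB1s d1 e1 xh y2 t]
  have hp2general : ∀ t : ℝ, quadF B2 d2 e2 (xh + t • y2)
      = quadF B2 d2 e2 xh + 2 * t * δ2 := by
    intro t
    rw [quad_expand B2 hB2s d2 e2 xh y2 t, hB2xh, hB2quad]
    ring
  clear_value γ β δ2
  obtain ⟨tt, htt⟩ : ∃ tt : ℝ, tt * δ2 ≤ 0 ∧ tt ^ 2 = T ^ 2 := by
    rcases le_or_gt δ2 0 with h | h
    · exact ⟨T, mul_nonpos_of_nonneg_of_nonpos (by linarith) h, rfl⟩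
    · exact ⟨-T, by nlinarith, by ring⟩
  set z := xh + tt • y2 with hzd
  have hp2z : quadF B2 d2 e2 z < 0 := by
    rw [hzd, hp2general tt]
    linarith [htt.1]
  have hp1z : 0 < quadF B1 d1 e1 z := by
    rw [hzd, hp1general tt]
    generalize hq : quadF B1 d1 e1 xh = P at habsp hγT ⊢
    have h2 : tt ^ 2 * γ = T * (γ * T) := by rw [htt.2]; ring
    have habs_tt : -T ≤ tt ∧ tt ≤ T := by
      constructor <;> nlinarith [htt.2, hT1]
    nlinarith [hγT, hT1, habs1, habs2, habsp, habs_tt.1, habs_tt.2, hγ,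
      mul_le_mul_of_nonneg_left habs_tt.2 (le_trans zero_le_one hT1)]
  -- step 2 : intermediate value to land on the boundary of p1
  set C1 := (B1.mulVec xh + d1) ⬝ᵥ (z - xh) with hC1d
  set C2 := (z - xh) ⬝ᵥ B1.mulVec (z - xh) with hC2d
  have hF : ∀ s : ℝ, quadF B1 d1 e1 (xh + s • (z - xh))
      = quadF B1 d1 e1 xh + 2 * s * C1 + s ^ 2 * C2 :=
    fun s => quad_expand B1 hB1s d1 e1 xh (z - xh) s
  have hcont : Continuous fun s : ℝ => quadF B1 d1 e1 xh + 2 * s * C1 + s ^ 2 * C2 :=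
    (continuous_const.add ((continuous_const.mul continuous_id).mul continuous_const)).add
      ((continuous_pow 2).mul continuous_const)
  have hsub := intermediate_value_Icc (zero_le_one (α := ℝ)) hcont.continuousOn
  have h0mem : (0 : ℝ) ∈ Icc (quadF B1 d1 e1 xh + 2 * 0 * C1 + 0 ^ 2 * C2)
      (quadF B1 d1 e1 xh + 2 * 1 * C1 + 1 ^ 2 * C2) := by
    constructor
    · norm_num; linarith
    · have := hF 1
      rw [one_smul, add_sub_cancel] at this
      rw [← this]
      exact le_of_lt hp1z
  obtain ⟨s, hsmem, hFs⟩ := hsub h0mem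
  set xs := xh + s • (z - xh) with hxsd
  have hp1xs : quadF B1 d1 e1 xs = 0 := by rw [hxsd, hF s]; exact hFs
  have hp2xs : quadF B2 d2 e2 xs < 0 := by
    have hcv := quad_convex hB2s hB2 d2 e2 xh z hsmem.1 hsmem.2
    rw [← hxsd] at hcv
    rcases lt_or_ge s 1 with hs1 | hs1
    · have t1 : (1 - s) * quadF B2 d2 e2 xh < 0 := mul_neg_of_pos_of_neg (by linarith) hp2hx
      have t2 : s * quadF B2 d2 e2 z ≤ 0 :=
        mul_nonpos_of_nonneg_of_nonpos hsmem.1 (le_of_lt hp2z)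
      linarith
    · have hs2 : s = 1 := le_antisymm hsmem.2 hs1
      rw [hs2] at hcv
      norm_num at hcv
      linarith
  -- xs is in the SDP set
  have hxsSDP : xs ∈ ShatSDP A1 A2 b1 b2 c1 c2 := by
    apply hTsub
    · rw [← hmix1]; exact le_of_eq hp1xs
    · rw [← hmix2]; exact le_of_lt hp2xs
  -- xs is not in the convex hull
  have hxsnotS : xs ∉ Shat A1 A2 b1 b2 c1 c2 := by
    rintro ⟨hq1, hq2⟩
    have hid1 : (g1 0 * g2 1 - g1 1 * g2 0) * quadF A1 b1 c1 xs
        = g2 1 * quadF B1 d1 e1 xs - g1 1 * quadF B2 d2 e2 xs := by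
      rw [hmix1, hmix2]; ring
    have hid2 : (g1 0 * g2 1 - g1 1 * g2 0) * quadF A2 b2 c2 xs
        = g1 0 * quadF B2 d2 e2 xs - g2 0 * quadF B1 d1 e1 xs := by
      rw [hmix1, hmix2]; ring
    rw [hp1xs] at hid1 hid2
    rcases lt_trichotomy (g1 0 * g2 1 - g1 1 * g2 0) 0 with hlt | heq0 | hgt
    · nlinarith [hid2, hp2xs, hq2, hg10]
    · exact hdet heq0
    · nlinarith [hid1, hp2xs, hq1, hg11]
  have hnotin : xs ∉ convexHull ℝ (Shat A1 A2 b1 b2 c1 c2) := by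
    intro hmem
    rw [convexHull_eq] at hmem
    obtain ⟨ι, t, w, zf, hw0, hw1, hzf, hcm⟩ := hmem
    set cvec := B1.mulVec xs + d1 with hcvecd
    have key : ∀ zz : Fin n → ℝ, quadF B1 d1 e1 zz
        = 2 * (cvec ⬝ᵥ (zz - xs)) + (zz - xs) ⬝ᵥ B1.mulVec (zz - xs) := by
      intro zz
      have h := quad_expand B1 hB1s d1 e1 xs (zz - xs) 1
      rw [one_smul, add_sub_cancel] at h
      rw [h, hp1xs]
      ring
    have hFz : ∀ zz ∈ Shat A1 A2 b1 b2 c1 c2,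
        cvec ⬝ᵥ (zz - xs) ≤ 0 ∧ (cvec ⬝ᵥ (zz - xs) = 0 → zz = xs) := by
      intro zz hzz
      have hp1zz : quadF B1 d1 e1 zz ≤ 0 := by
        rw [hmix1]
        have t1 : g1 0 * quadF A1 b1 c1 zz ≤ 0 :=
          mul_nonpos_of_nonneg_of_nonpos (le_of_lt hg10) hzz.1
        have t2 : g1 1 * quadF A2 b2 c2 zz ≤ 0 :=
          mul_nonpos_of_nonneg_of_nonpos (le_of_lt hg11) hzz.2
        linarith
      have hf := psd_form_nonneg hB1 (zz - xs)
      have hk := key zz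
      constructor
      · linarith [hk ▸ hp1zz]
      · intro hF0
        rw [hF0] at hk
        have hform0 : (zz - xs) ⬝ᵥ B1.mulVec (zz - xs) = 0 := by linarith [hk ▸ hp1zz]
        have hker : B1.mulVec (zz - xs) = 0 := psd_form_zero hB1 hform0
        have hdd : d1 ⬝ᵥ (zz - xs) = 0 := by
          have h1 : (B1.mulVec xs) ⬝ᵥ (zz - xs) = 0 := by
            rw [dotProduct_comm, dot_symm B1 hB1s (zz - xs) xs, hker, dotProduct_zero]
          rw [hcvecd, add_dotProduct, h1, zero_add] at hF0
          exact hF0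
        have := hfail (zz - xs) hker hdd
        have : zz = xs := by
          have h := sub_eq_zero.mp this
          exact h
        exact this
    have hsum : ∑ i ∈ t, w i • zf i = xs := by
      rw [← hcm, Finset.centerMass_eq_of_sum_1 _ _ hw1]
    have Fsum : cvec ⬝ᵥ xs = ∑ i ∈ t, w i * (cvec ⬝ᵥ zf i) := by
      rw [← hsum]
      simp only [dotProduct, Finset.sum_apply, Pi.smul_apply, smul_eq_mul, Finset.mul_sum]
      rw [Finset.sum_comm]
      refine Finset.sum_congr rfl fun i _ => Finset.sum_congr rfl fun j _ => by ring
    have Gsum : ∑ i ∈ t, w i * (cvec ⬝ᵥ (zf i - xs)) = 0 := by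
      have hexp : ∀ i, w i * (cvec ⬝ᵥ (zf i - xs))
          = w i * (cvec ⬝ᵥ zf i) - w i * (cvec ⬝ᵥ xs) := by
        intro i
        rw [dotProduct_sub]; ring
      rw [Finset.sum_congr rfl fun i _ => hexp i, Finset.sum_sub_distrib,
        ← Finset.sum_mul, hw1, one_mul, ← Fsum, sub_self]
    have hterms : ∀ i ∈ t, w i * (cvec ⬝ᵥ (zf i - xs)) ≤ 0 := fun i hi =>
      mul_nonpos_of_nonneg_of_nonpos (hw0 i hi) ((hFz (zf i) (hzf i hi)).1)
    have hallzero : ∀ i ∈ t, w i * (cvec ⬝ᵥ (zf i - xs)) = 0 :=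
      (Finset.sum_eq_zero_iff_of_nonpos hterms).mp Gsum
    obtain ⟨i, hi, hwi⟩ : ∃ i ∈ t, w i ≠ 0 := by
      by_contra hcon
      push_neg at hcon
      rw [Finset.sum_eq_zero (fun i hi => hcon i hi)] at hw1
      norm_num at hw1
    have hFi : cvec ⬝ᵥ (zf i - xs) = 0 := by
      have := hallzero i hi
      rcases mul_eq_zero.mp this with h | h
      · exact absurd h hwi
      · exact h
    have : zf i = xs := (hFz (zf i) (hzf i hi)).2 hFi
    exact hxsnotS (this ▸ hzf i hi)
  intro heq
  rw [heq] at hnotin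
  exact hnotin hxsSDP

end Stmt19
namespace Stmt19

variable {n : ℕ}

lemma herm_of_symm {M : Matrix (Fin n) (Fin n) ℝ} (h : M.IsSymm) : M.IsHermitian := by
  unfold Matrix.IsHermitian
  ext i j
  rw [conjTranspose_apply, star_trivial]
  exact h.apply i j

lemma psd_not_pd_kernel {M : Matrix (Fin n) (Fin n) ℝ} (hpsd : M.PosSemidef)
    (hnpd : ¬ M.PosDef) : ∃ y : Fin n → ℝ, y ≠ 0 ∧ M.mulVec y = 0 := by
  rw [posDef_iff_dotProduct_mulVec] at hnpd
  push_neg at hnpd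
  obtain ⟨x, hx, hle⟩ := hnpd hpsd.1
  have hle' : x ⬝ᵥ M.mulVec x ≤ 0 := by simpa using hle
  have h0 : x ⬝ᵥ M.mulVec x = 0 := le_antisymm hle' (psd_form_nonneg hpsd x)
  exact ⟨x, hx, psd_form_zero hpsd h0⟩

lemma comp_pos {A1 A2 : Matrix (Fin n) (Fin n) ℝ}
    (hnc1 : ¬ A1.PosSemidef) (hnc2 : ¬ A2.PosSemidef)
    {g : Fin 2 → ℝ} (hg : ∀ i, 0 ≤ g i) (hpsd : (Amix2 A1 A2 g).PosSemidef)
    (hne : g ≠ 0) : 0 < g 0 ∧ 0 < g 1 := by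
  have hg0 : g 0 ≠ 0 := by
    intro h0
    rcases eq_or_ne (g 1) 0 with h1 | h1
    · apply hne
      funext i
      fin_cases i
      · exact h0
      · exact h1
    · have h1pos : 0 < g 1 := lt_of_le_of_ne (hg 1) (Ne.symm h1)
      have hm : Amix2 A1 A2 g = g 1 • A2 := by rw [Amix2, h0, zero_smul, zero_add]
      apply hnc2
      have := psd_smul (hm ▸ hpsd) (le_of_lt (inv_pos.mpr h1pos))
      rwa [smul_smul, inv_mul_cancel₀ (ne_of_gt h1pos), one_smul] at this
  have hg1 : g 1 ≠ 0 := by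
    intro h1
    have h0pos : 0 < g 0 := lt_of_le_of_ne (hg 0) (Ne.symm hg0)
    have hm : Amix2 A1 A2 g = g 0 • A1 := by rw [Amix2, h1, zero_smul, add_zero]
    apply hnc1
    have := psd_smul (hm ▸ hpsd) (le_of_lt (inv_pos.mpr h0pos))
    rwa [smul_smul, inv_mul_cancel₀ (ne_of_gt h0pos), one_smul] at this
  exact ⟨lt_of_le_of_ne (hg 0) (Ne.symm hg0), lt_of_le_of_ne (hg 1) (Ne.symm hg1)⟩

lemma not_ray {A1 A2 : Matrix (Fin n) (Fin n) ℝ} (hA1 : A1.IsSymm)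
    {gh : Fin 2 → ℝ} (hgh0 : ∀ i, 0 ≤ gh i) (hghPD : (Amix2 A1 A2 gh).PosDef)
    (w : Fin 2 → ℝ) (hw : ∀ h ∈ Gamma1' A1 A2, ∃ s : ℝ, h = s • w)
    (hghp1 : 0 < gh 1) : False := by
  obtain ⟨s, hs⟩ := hw gh ⟨hgh0, hghPD.posSemidef⟩
  have hsw1 : gh 1 = s * w 1 := by rw [hs]; rfl
  have hw1 : w 1 ≠ 0 := by
    intro h
    rw [h, mul_zero] at hsw1
    exact absurd hsw1 (ne_of_gt hghp1)
  obtain ⟨ε, hε, hP⟩ := pd_perturb hghPD ((herm_of_symm hA1).neg)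
  set gh' : Fin 2 → ℝ := gh + ε • (Pi.single 0 1 : Fin 2 → ℝ) with hgh'd
  have hev0 : gh' 0 = gh 0 + ε := by
    simp [hgh'd, Pi.single_eq_same]
  have hev1 : gh' 1 = gh 1 := by
    simp [hgh'd, Pi.single_eq_of_ne (show (1 : Fin 2) ≠ 0 by decide)]
  have hAm : Amix2 A1 A2 gh' = Amix2 A1 A2 gh - ε • (-A1) := by
    rw [Amix2, Amix2, hev0, hev1, smul_neg, sub_neg_eq_add, add_smul]
    abel
  have hmem : gh' ∈ Gamma1' A1 A2 := by
    constructor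
    · intro i
      fin_cases i
      · rw [show gh' ⟨0, by norm_num⟩ = gh' 0 from rfl, hev0]
        have := hgh0 0
        linarith
      · rw [show gh' ⟨1, by norm_num⟩ = gh' 1 from rfl, hev1]
        exact hgh0 1
    · rw [hAm]
      exact hP ε (le_of_lt hε) le_rfl
  obtain ⟨s', hs'⟩ := hw gh' hmem
  have h1 : gh' 1 = s' * w 1 := by rw [hs']; rfl
  have h0 : gh' 0 = s' * w 0 := by rw [hs']; rfl
  have hs0 : gh 0 = s * w 0 := by rw [hs]; rfl
  have hss : s' = s := by
    rw [hev1, hsw1] at h1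
    exact mul_right_cancel₀ hw1 h1.symm
  rw [hev0, hss, ← hs0] at h0
  linarith

lemma amix_swap (A1 A2 : Matrix (Fin n) (Fin n) ℝ) (g : Fin 2 → ℝ) :
    Amix2 A2 A1 ![g 1, g 0] = Amix2 A1 A2 g := by
  show g 1 • A2 + g 0 • A1 = g 0 • A1 + g 1 • A2
  exact add_comm _ _

lemma bmix_swap (b1 b2 : Fin n → ℝ) (g : Fin 2 → ℝ) :
    bmix2 b2 b1 ![g 1, g 0] = bmix2 b1 b2 g := by
  show g 1 • b2 + g 0 • b1 = g 0 • b1 + g 1 • b2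
  exact add_comm _ _

end Stmt19
set_option maxHeartbeats 1000000 in
/-- sets defined by two nonconvex quadratic constraints, with
primal and dual strict feasibility: `conv(Ŝ) = Ŝ_SDP` iff for both generators
`γ⁽ⁱ⁾` of `Γ₁`, `ker(A[γ⁽ⁱ⁾]) ∩ (b[γ⁽ⁱ⁾])^⊥` is nontrivial. -/
theorem stmt19 {n : ℕ} (A1 A2 : Matrix (Fin n) (Fin n) ℝ) (b1 b2 : Fin n → ℝ)
    (c1 c2 : ℝ) (hA1 : A1.IsSymm) (hA2 : A2.IsSymm)
    (hnc1 : ¬ A1.PosSemidef) (hnc2 : ¬ A2.PosSemidef)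
    (hprimal : ∃ x : Fin n → ℝ, quadF A1 b1 c1 x < 0 ∧ quadF A2 b2 c2 x < 0)
    (hdual : ∃ g : Fin 2 → ℝ, (∀ i, 0 ≤ g i) ∧ (Amix2 A1 A2 g).PosDef)
    (g1 g2 : Fin 2 → ℝ) (hg1 : ∀ i, 0 ≤ g1 i) (hg2 : ∀ i, 0 ≤ g2 i)
    (hgen : Gamma1' A1 A2 =
      {g : Fin 2 → ℝ | ∃ a b : ℝ, 0 ≤ a ∧ 0 ≤ b ∧ g = a • g1 + b • g2}) :
    convexHull ℝ (Shat A1 A2 b1 b2 c1 c2) = ShatSDP A1 A2 b1 b2 c1 c2 ↔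
      ((∃ y : Fin n → ℝ, y ≠ 0 ∧ (Amix2 A1 A2 g1).mulVec y = 0 ∧
          bmix2 b1 b2 g1 ⬝ᵥ y = 0) ∧
       (∃ y : Fin n → ℝ, y ≠ 0 ∧ (Amix2 A1 A2 g2).mulVec y = 0 ∧
          bmix2 b1 b2 g2 ⬝ᵥ y = 0)) := by
  classical
  open Stmt19 in
  obtain ⟨xh, hq1h, hq2h⟩ := hprimal
  obtain ⟨gh, hgh0, hghPD⟩ := hdual
  have hn : 0 < n := by
    rcases Nat.eq_zero_or_pos n with h0 | h
    · exact absurd (Stmt19.dim0_psd h0 A1) hnc1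
    · exact h
  have hmemG : ∀ a b : ℝ, 0 ≤ a → 0 ≤ b → a • g1 + b • g2 ∈ Gamma1' A1 A2 := by
    intro a b ha hb
    rw [hgen]
    exact ⟨a, b, ha, hb, rfl⟩
  have hg1G : g1 ∈ Gamma1' A1 A2 := by
    have := hmemG 1 0 zero_le_one le_rfl
    simpa using this
  have hg2G : g2 ∈ Gamma1' A1 A2 := by
    have := hmemG 0 1 le_rfl zero_le_one
    simpa using this
  have hB1 : (Amix2 A1 A2 g1).PosSemidef := hg1G.2
  have hB2 : (Amix2 A1 A2 g2).PosSemidef := hg2G.2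
  -- gh has positive components
  have hghne : gh ≠ 0 := by
    intro h
    have hz : Amix2 A1 A2 gh = 0 := by
      rw [h, Amix2]
      simp
    set e : Fin n → ℝ := Pi.single ⟨0, hn⟩ 1 with hed
    have hene : e ≠ 0 := by
      intro hcon
      have := congr_fun hcon ⟨0, hn⟩
      simp [hed] at this
    have := Stmt19.pd_form_pos hghPD hene
    rw [hz, Matrix.zero_mulVec, dotProduct_zero] at this
    exact lt_irrefl _ this
  obtain ⟨hghp0, hghp1⟩ := Stmt19.comp_pos hnc1 hnc2 hgh0 hghPD.posSemidef hghne
  -- g1 and g2 are nonzero with positive components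
  have hg1ne : g1 ≠ 0 := by
    intro h
    apply Stmt19.not_ray hA1 hgh0 hghPD g2 _ hghp1
    intro hh hmm
    rw [hgen] at hmm
    obtain ⟨a, b, _, _, rfl⟩ := hmm
    exact ⟨b, by rw [h]; simp⟩
  have hg2ne : g2 ≠ 0 := by
    intro h
    apply Stmt19.not_ray hA1 hgh0 hghPD g1 _ hghp1
    intro hh hmm
    rw [hgen] at hmm
    obtain ⟨a, b, _, _, rfl⟩ := hmm
    exact ⟨a, by rw [h]; simp⟩
  obtain ⟨hg10, hg11⟩ := Stmt19.comp_pos hnc1 hnc2 hg1 hB1 hg1ne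
  obtain ⟨hg20, hg21⟩ := Stmt19.comp_pos hnc1 hnc2 hg2 hB2 hg2ne
  -- the two generators are independent
  have hdet : g1 0 * g2 1 - g1 1 * g2 0 ≠ 0 := by
    intro hd
    apply Stmt19.not_ray hA1 hgh0 hghPD g1 _ hghp1
    intro hh hmm
    rw [hgen] at hmm
    obtain ⟨a, b, _, _, rfl⟩ := hmm
    refine ⟨a + b * (g2 0 / g1 0), ?_⟩
    funext i
    have hca : (a • g1 + b • g2) i = a * g1 i + b * g2 i := rfl
    have hcb : ((a + b * (g2 0 / g1 0)) • g1) i = (a + b * (g2 0 / g1 0)) * g1 i := rfl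
    rw [hca, hcb]
    fin_cases i
    · show a * g1 0 + b * g2 0 = (a + b * (g2 0 / g1 0)) * g1 0
      field_simp
    · show a * g1 1 + b * g2 1 = (a + b * (g2 0 / g1 0)) * g1 1
      have hg21eq : g2 1 * g1 0 = g2 0 * g1 1 := by linarith [hd]
      field_simp
      nlinarith [hg21eq]
  -- B1, B2 are not definite
  have hB1npd : ¬ (Amix2 A1 A2 g1).PosDef := by
    intro hPD
    obtain ⟨ε, hε, hP⟩ := Stmt19.pd_perturb hPD (Stmt19.herm_of_symm (Stmt19.amix_symm hA1 hA2 g2))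
    set ε' := min ε (min (g1 0 / g2 0) (g1 1 / g2 1)) with hε'd
    have hε'pos : 0 < ε' := lt_min hε (lt_min (div_pos hg10 hg20) (div_pos hg11 hg21))
    have hε'le : ε' ≤ ε := min_le_left _ _
    have hε'le0 : ε' * g2 0 ≤ g1 0 := by
      have h1 : ε' ≤ g1 0 / g2 0 := le_trans (min_le_right _ _) (min_le_left _ _)
      rw [le_div_iff₀ hg20] at h1
      exact h1
    have hε'le1 : ε' * g2 1 ≤ g1 1 := by
      have h1 : ε' ≤ g1 1 / g2 1 := le_trans (min_le_right _ _) (min_le_right _ _)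
      rw [le_div_iff₀ hg21] at h1
      exact h1
    have hmem : g1 - ε' • g2 ∈ Gamma1' A1 A2 := by
      constructor
      · intro i
        fin_cases i
        · show 0 ≤ g1 0 - ε' * g2 0
          linarith
        · show 0 ≤ g1 1 - ε' * g2 1
          linarith
      · have hAm : Amix2 A1 A2 (g1 - ε' • g2) = Amix2 A1 A2 g1 - ε' • Amix2 A1 A2 g2 := by
          rw [Amix2, Amix2, Amix2]
          show (g1 0 - ε' * g2 0) • A1 + (g1 1 - ε' * g2 1) • A2 = _
          rw [sub_smul, sub_smul, smul_add, smul_smul, smul_smul]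
          abel
        rw [hAm]
        exact hP ε' (le_of_lt hε'pos) hε'le
    rw [hgen] at hmem
    obtain ⟨a, b, ha, hb, hrep⟩ := hmem
    have h0 : (1 - a) * g1 0 + (-b - ε') * g2 0 = 0 := by
      have := congr_fun hrep 0
      have hv : (a • g1 + b • g2) 0 = a * g1 0 + b * g2 0 := rfl
      have hv2 : (g1 - ε' • g2) 0 = g1 0 - ε' * g2 0 := rfl
      rw [hv2, hv] at this
      linarith
    have h1 : (1 - a) * g1 1 + (-b - ε') * g2 1 = 0 := by
      have := congr_fun hrep 1
      have hv : (a • g1 + b • g2) 1 = a * g1 1 + b * g2 1 := rfl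
      have hv2 : (g1 - ε' • g2) 1 = g1 1 - ε' * g2 1 := rfl
      rw [hv2, hv] at this
      linarith
    have := Stmt19.solve22 hdet h0 h1
    linarith [this.2]
  have hB2npd : ¬ (Amix2 A1 A2 g2).PosDef := by
    intro hPD
    obtain ⟨ε, hε, hP⟩ := Stmt19.pd_perturb hPD (Stmt19.herm_of_symm (Stmt19.amix_symm hA1 hA2 g1))
    set ε' := min ε (min (g2 0 / g1 0) (g2 1 / g1 1)) with hε'd
    have hε'pos : 0 < ε' := lt_min hε (lt_min (div_pos hg20 hg10) (div_pos hg21 hg11))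
    have hε'le : ε' ≤ ε := min_le_left _ _
    have hε'le0 : ε' * g1 0 ≤ g2 0 := by
      have h1 : ε' ≤ g2 0 / g1 0 := le_trans (min_le_right _ _) (min_le_left _ _)
      rw [le_div_iff₀ hg10] at h1
      exact h1
    have hε'le1 : ε' * g1 1 ≤ g2 1 := by
      have h1 : ε' ≤ g2 1 / g1 1 := le_trans (min_le_right _ _) (min_le_right _ _)
      rw [le_div_iff₀ hg11] at h1
      exact h1
    have hmem : g2 - ε' • g1 ∈ Gamma1' A1 A2 := by
      constructor
      · intro i
        fin_cases i
        · show 0 ≤ g2 0 - ε' * g1 0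
          linarith
        · show 0 ≤ g2 1 - ε' * g1 1
          linarith
      · have hAm : Amix2 A1 A2 (g2 - ε' • g1) = Amix2 A1 A2 g2 - ε' • Amix2 A1 A2 g1 := by
          rw [Amix2, Amix2, Amix2]
          show (g2 0 - ε' * g1 0) • A1 + (g2 1 - ε' * g1 1) • A2 = _
          rw [sub_smul, sub_smul, smul_add, smul_smul, smul_smul]
          abel
        rw [hAm]
        exact hP ε' (le_of_lt hε'pos) hε'le
    rw [hgen] at hmem
    obtain ⟨a, b, ha, hb, hrep⟩ := hmem
    have h0 : (-a - ε') * g1 0 + (1 - b) * g2 0 = 0 := by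
      have := congr_fun hrep 0
      have hv : (a • g1 + b • g2) 0 = a * g1 0 + b * g2 0 := rfl
      have hv2 : (g2 - ε' • g1) 0 = g2 0 - ε' * g1 0 := rfl
      rw [hv2, hv] at this
      linarith
    have h1 : (-a - ε') * g1 1 + (1 - b) * g2 1 = 0 := by
      have := congr_fun hrep 1
      have hv : (a • g1 + b • g2) 1 = a * g1 1 + b * g2 1 := rfl
      have hv2 : (g2 - ε' • g1) 1 = g2 1 - ε' * g1 1 := rfl
      rw [hv2, hv] at this
      linarith
    have := Stmt19.solve22 hdet h0 h1
    linarith [this.1]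
  -- kernel vectors
  obtain ⟨y1, hy1ne, hk1⟩ := Stmt19.psd_not_pd_kernel hB1 hB1npd
  obtain ⟨y2, hy2ne, hk2⟩ := Stmt19.psd_not_pd_kernel hB2 hB2npd
  -- no common kernel
  have hnck : ∀ y : Fin n → ℝ, (Amix2 A1 A2 g1).mulVec y = 0 →
      (Amix2 A1 A2 g2).mulVec y = 0 → y = 0 := by
    intro y h1 h2
    by_contra hy
    have hghG : gh ∈ Gamma1' A1 A2 := ⟨hgh0, hghPD.posSemidef⟩
    rw [hgen] at hghG
    obtain ⟨ah, bh, hah, hbh, hghrep⟩ := hghG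
    have hker : (Amix2 A1 A2 gh).mulVec y = 0 := by
      rw [hghrep, amix_add, amix_smul, amix_smul, add_mulVec, smul_mulVec,
        smul_mulVec, h1, h2, smul_zero, smul_zero, add_zero]
    have := Stmt19.pd_form_pos hghPD hy
    rw [hker, dotProduct_zero] at this
    exact lt_irrefl _ this
  have w12pos : 0 < y1 ⬝ᵥ (Amix2 A1 A2 g2).mulVec y1 := by
    rcases lt_or_eq_of_le (Stmt19.psd_form_nonneg hB2 y1) with h | h
    · exact h
    · exact absurd (hnck y1 hk1 (Stmt19.psd_form_zero hB2 h.symm)) hy1ne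
  have w21pos : 0 < y2 ⬝ᵥ (Amix2 A1 A2 g1).mulVec y2 := by
    rcases lt_or_eq_of_le (Stmt19.psd_form_nonneg hB1 y2) with h | h
    · exact h
    · exact absurd (hnck y2 (Stmt19.psd_form_zero hB1 h.symm) hk2) hy2ne
  have hAmdef : ∀ g : Fin 2 → ℝ, Amix2 A1 A2 g = g 0 • A1 + g 1 • A2 := fun _ => rfl
  have hbmdef : ∀ g : Fin 2 → ℝ, bmix2 b1 b2 g = g 0 • b1 + g 1 • b2 := fun _ => rfl
  constructor
  · -- equality implies the kernel conditions
    intro heq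
    have hTsub : ∀ x : Fin n → ℝ,
        g1 0 * quadF A1 b1 c1 x + g1 1 * quadF A2 b2 c2 x ≤ 0 →
        g2 0 * quadF A1 b1 c1 x + g2 1 * quadF A2 b2 c2 x ≤ 0 →
        x ∈ ShatSDP A1 A2 b1 b2 c1 c2 := fun x h1 h2 =>
      Stmt19.mem_SDP_of_T hdet hk1 hk2 w12pos w21pos h1 h2
    constructor
    · by_contra hcon
      have hfail : ∀ y : Fin n → ℝ, (Amix2 A1 A2 g1).mulVec y = 0 →
          bmix2 b1 b2 g1 ⬝ᵥ y = 0 → y = 0 := by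
        intro y hk hb
        by_contra hy
        exact hcon ⟨y, hy, hk, hb⟩
      exact Stmt19.bwd_witness hA1 hA2 hg10 hg11 hg20 hg21 hdet hB1 hB2 hk2 w21pos
        (by nlinarith [mul_pos hg10 (neg_pos.mpr hq1h), mul_pos hg11 (neg_pos.mpr hq2h)])
        (by nlinarith [mul_pos hg20 (neg_pos.mpr hq1h), mul_pos hg21 (neg_pos.mpr hq2h)])
        hfail hTsub heq
    · by_contra hcon
      have hfail : ∀ y : Fin n → ℝ, (Amix2 A2 A1 ![g2 1, g2 0]).mulVec y = 0 →
          bmix2 b2 b1 ![g2 1, g2 0] ⬝ᵥ y = 0 → y = 0 := by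
        intro y hk hb
        rw [Stmt19.amix_swap] at hk
        rw [Stmt19.bmix_swap] at hb
        by_contra hy
        exact hcon ⟨y, hy, hk, hb⟩
      have hTsub' : ∀ x : Fin n → ℝ,
          (![g2 1, g2 0] : Fin 2 → ℝ) 0 * quadF A2 b2 c2 x
            + (![g2 1, g2 0] : Fin 2 → ℝ) 1 * quadF A1 b1 c1 x ≤ 0 →
          (![g1 1, g1 0] : Fin 2 → ℝ) 0 * quadF A2 b2 c2 x
            + (![g1 1, g1 0] : Fin 2 → ℝ) 1 * quadF A1 b1 c1 x ≤ 0 →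
          x ∈ ShatSDP A2 A1 b2 b1 c2 c1 := by
        intro x h1 h2
        have h1' : g2 1 * quadF A2 b2 c2 x + g2 0 * quadF A1 b1 c1 x ≤ 0 := h1
        have h2' : g1 1 * quadF A2 b2 c2 x + g1 0 * quadF A1 b1 c1 x ≤ 0 := h2
        rw [Stmt19.ShatSDP_swap A2 A1 b2 b1 c2 c1]
        exact Stmt19.mem_SDP_of_T hdet hk1 hk2 w12pos w21pos (by linarith) (by linarith)
      have happ := Stmt19.bwd_witness hA2 hA1
        (show (0:ℝ) < (![g2 1, g2 0] : Fin 2 → ℝ) 0 from hg21)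
        (show (0:ℝ) < (![g2 1, g2 0] : Fin 2 → ℝ) 1 from hg20)
        (show (0:ℝ) < (![g1 1, g1 0] : Fin 2 → ℝ) 0 from hg11)
        (show (0:ℝ) < (![g1 1, g1 0] : Fin 2 → ℝ) 1 from hg10)
        (show (![g2 1, g2 0] : Fin 2 → ℝ) 0 * (![g1 1, g1 0] : Fin 2 → ℝ) 1
            - (![g2 1, g2 0] : Fin 2 → ℝ) 1 * (![g1 1, g1 0] : Fin 2 → ℝ) 0 ≠ 0 from by
          show g2 1 * g1 0 - g2 0 * g1 1 ≠ 0
          intro h; exact hdet (by linarith))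
        (by rw [Stmt19.amix_swap]; exact hB2)
        (by rw [Stmt19.amix_swap]; exact hB1)
        (by rw [Stmt19.amix_swap]; exact hk1)
        (by rw [Stmt19.amix_swap]; exact w12pos)
        (show (![g2 1, g2 0] : Fin 2 → ℝ) 0 * quadF A2 b2 c2 xh
            + (![g2 1, g2 0] : Fin 2 → ℝ) 1 * quadF A1 b1 c1 xh < 0 from by
          show g2 1 * quadF A2 b2 c2 xh + g2 0 * quadF A1 b1 c1 xh < 0
          nlinarith [mul_pos hg20 (neg_pos.mpr hq1h), mul_pos hg21 (neg_pos.mpr hq2h)])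
        (show (![g1 1, g1 0] : Fin 2 → ℝ) 0 * quadF A2 b2 c2 xh
            + (![g1 1, g1 0] : Fin 2 → ℝ) 1 * quadF A1 b1 c1 xh < 0 from by
          show g1 1 * quadF A2 b2 c2 xh + g1 0 * quadF A1 b1 c1 xh < 0
          nlinarith [mul_pos hg10 (neg_pos.mpr hq1h), mul_pos hg11 (neg_pos.mpr hq2h)])
        hfail hTsub'
      apply happ
      rw [← Stmt19.Shat_swap A1 A2 b1 b2 c1 c2, ← Stmt19.ShatSDP_swap A1 A2 b1 b2 c1 c2]
      exact heq
  · -- kernel conditions imply equality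
    rintro ⟨⟨z1, hz1ne, hzk1, hzb1⟩, ⟨z2, hz2ne, hzk2, hzb2⟩⟩
    have w12z : 0 < z1 ⬝ᵥ (Amix2 A1 A2 g2).mulVec z1 := by
      rcases lt_or_eq_of_le (Stmt19.psd_form_nonneg hB2 z1) with h | h
      · exact h
      · exact absurd (hnck z1 hzk1 (Stmt19.psd_form_zero hB2 h.symm)) hz1ne
    have w21z : 0 < z2 ⬝ᵥ (Amix2 A1 A2 g1).mulVec z2 := by
      rcases lt_or_eq_of_le (Stmt19.psd_form_nonneg hB1 z2) with h | h
      · exact h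
      · exact absurd (hnck z2 (Stmt19.psd_form_zero hB1 h.symm) hzk2) hz2ne
    apply Subset.antisymm
    · exact Stmt19.convexHull_subset_SDP A1 A2 b1 b2 c1 c2
    · intro x hx
      have hp1 := Stmt19.SDP_agg g1 hg1 hB1 hx
      have hp2 := Stmt19.SDP_agg g2 hg2 hB2 hx
      set a1 := z1 ⬝ᵥ A1.mulVec z1 with ha1d
      set a2 := z1 ⬝ᵥ A2.mulVec z1 with ha2d
      set a1' := z2 ⬝ᵥ A1.mulVec z2 with ha1'd
      set a2' := z2 ⬝ᵥ A2.mulVec z2 with ha2'd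
      have e1 : g1 0 * a1 + g1 1 * a2 = 0 := by
        rw [ha1d, ha2d, ← Stmt19.amix_form, hzk1, dotProduct_zero]
      have e2 : 0 < g2 0 * a1 + g2 1 * a2 := by
        rw [ha1d, ha2d, ← Stmt19.amix_form]; exact w12z
      have e3 : g2 0 * a1' + g2 1 * a2' = 0 := by
        rw [ha1'd, ha2'd, ← Stmt19.amix_form, hzk2, dotProduct_zero]
      have e4 : 0 < g1 0 * a1' + g1 1 * a2' := by
        rw [ha1'd, ha2'd, ← Stmt19.amix_form]; exact w21z
      set D := g1 0 * g2 1 - g1 1 * g2 0 with hDd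
      have hI1 : D * a1 = - g1 1 * (g2 0 * a1 + g2 1 * a2) := by
        linear_combination (g2 1) * e1
      have hI2 : D * a2 = g1 0 * (g2 0 * a1 + g2 1 * a2) := by
        linear_combination (- g2 0) * e1
      have hI3 : D * a1' = g2 1 * (g1 0 * a1' + g1 1 * a2') := by
        linear_combination (- g1 1) * e3
      have hI4 : D * a2' = - g2 0 * (g1 0 * a1' + g1 1 * a2') := by
        linear_combination (g1 0) * e3
      rcases le_or_gt (quadF A1 b1 c1 x) 0 with hq1v | hq1v
      · rcases le_or_gt (quadF A2 b2 c2 x) 0 with hq2v | hq2v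
        · exact subset_convexHull ℝ _ ⟨hq1v, hq2v⟩
        · -- q2 is violated
          rw [Stmt19.Shat_swap A1 A2 b1 b2 c1 c2]
          rcases lt_trichotomy D 0 with hD | hD | hD
          · -- use z1 : a2 < 0
            have ha2neg : a2 < 0 := by
              by_contra hcc; push_neg at hcc
              have : D * a2 ≤ 0 := mul_nonpos_of_nonpos_of_nonneg (le_of_lt hD) hcc
              nlinarith [mul_pos hg10 e2]
            refine Stmt19.line_mem_convexHull hA2 hA1 hg11 hg10 ?_ ?_ ha2neg (by linarith) hq2v
            · rw [show g1 1 • A2 + g1 0 • A1 = Amix2 A1 A2 g1 from by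
                rw [hAmdef]; exact add_comm _ _]
              exact hzk1
            · rw [show g1 1 • b2 + g1 0 • b1 = bmix2 b1 b2 g1 from by
                rw [hbmdef]; exact add_comm _ _]
              exact hzb1
          · exact absurd hD hdet
          · -- use z2 : a2' < 0
            have ha2'neg : a2' < 0 := by
              by_contra hcc; push_neg at hcc
              have : 0 ≤ D * a2' := mul_nonneg (le_of_lt hD) hcc
              nlinarith [mul_pos hg20 e4]
            refine Stmt19.line_mem_convexHull hA2 hA1 hg21 hg20 ?_ ?_ ha2'neg (by linarith) hq2v
            · rw [show g2 1 • A2 + g2 0 • A1 = Amix2 A1 A2 g2 from by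
                rw [hAmdef]; exact add_comm _ _]
              exact hzk2
            · rw [show g2 1 • b2 + g2 0 • b1 = bmix2 b1 b2 g2 from by
                rw [hbmdef]; exact add_comm _ _]
              exact hzb2
      · -- q1 is violated
        rcases lt_trichotomy D 0 with hD | hD | hD
        · -- use z2 : a1' < 0
          have ha1'neg : a1' < 0 := by
            by_contra hcc; push_neg at hcc
            have : D * a1' ≤ 0 := mul_nonpos_of_nonpos_of_nonneg (le_of_lt hD) hcc
            nlinarith [mul_pos hg21 e4]
          refine Stmt19.line_mem_convexHull hA1 hA2 hg20 hg21 ?_ ?_ ha1'neg hp2 hq1v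
          · rw [show g2 0 • A1 + g2 1 • A2 = Amix2 A1 A2 g2 from (hAmdef g2).symm]
            exact hzk2
          · rw [show g2 0 • b1 + g2 1 • b2 = bmix2 b1 b2 g2 from (hbmdef g2).symm]
            exact hzb2
        · exact absurd hD hdet
        · -- use z1 : a1 < 0
          have ha1neg : a1 < 0 := by
            by_contra hcc; push_neg at hcc
            have : 0 ≤ D * a1 := mul_nonneg (le_of_lt hD) hcc
            nlinarith [mul_pos hg11 e2]
          refine Stmt19.line_mem_convexHull hA1 hA2 hg10 hg11 ?_ ?_ ha1neg hp1 hq1v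
          · rw [show g1 0 • A1 + g1 1 • A2 = Amix2 A1 A2 g1 from (hAmdef g1).symm]
            exact hzk1
          · rw [show g1 0 • b1 + g1 1 • b2 = bmix2 b1 b2 g1 from (hbmdef g1).symm]
            exact hzb1
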